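/- For all indices μ > -1 and all 0 < x < y, the ratio of modified Bessel functions of the first kind satisfies the upper bound I_μ(y)/I_μ(x) < (y/x)^(μ+2) · e^(y−x). -/

import Mathlib

open Real

/-- Modified Bessel function of the first kind. -/
noncomputable def besselI (μ z : ℝ) : ℝ :=
  ∑' k : ℕ, (z / 2) ^ (μ + 2 * (k : ℝ)) / ((Nat.factorial k : ℝ) * Real.Gamma ((k : ℝ) + μ + 1))


lemma cheb_finset (F : Finset ℕ) (p t s : ℕ → ℝ) (hp : ∀ i, 0 ≤ p i)
    (hts : ∀ i j, 0 ≤ (t i - t j) * (s j - s i)) :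
    (∑ i ∈ F, p i * (t i * s i)) * ∑ i ∈ F, p i ≤
      (∑ i ∈ F, p i * t i) * ∑ i ∈ F, p i * s i := by
  have key : 0 ≤ ∑ i ∈ F, ∑ j ∈ F, p i * p j * ((t i - t j) * (s j - s i)) := by
    refine Finset.sum_nonneg fun i _ => Finset.sum_nonneg fun j _ => ?_
    exact mul_nonneg (mul_nonneg (hp i) (hp j)) (hts i j)
  have expand : (∑ i ∈ F, p i * t i) * (∑ j ∈ F, p j * s j)
      + (∑ i ∈ F, p i * s i) * (∑ j ∈ F, p j * t j)
      - (∑ i ∈ F, p i * (t i * s i)) * (∑ j ∈ F, p j)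
      - (∑ i ∈ F, p i) * (∑ j ∈ F, p j * (t j * s j))
      = ∑ i ∈ F, ∑ j ∈ F, p i * p j * ((t i - t j) * (s j - s i)) := by
    rw [Finset.sum_mul_sum, Finset.sum_mul_sum, Finset.sum_mul_sum, Finset.sum_mul_sum,
      ← Finset.sum_add_distrib, ← Finset.sum_sub_distrib, ← Finset.sum_sub_distrib]
    refine Finset.sum_congr rfl fun i _ => ?_
    rw [← Finset.sum_add_distrib, ← Finset.sum_sub_distrib, ← Finset.sum_sub_distrib]
    exact Finset.sum_congr rfl fun j _ => by ring
  have h1 : (∑ i ∈ F, p i * s i) * (∑ j ∈ F, p j * t j)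
      = (∑ i ∈ F, p i * t i) * (∑ j ∈ F, p j * s j) := mul_comm _ _
  have h2 : (∑ i ∈ F, p i) * (∑ j ∈ F, p j * (t j * s j))
      = (∑ i ∈ F, p i * (t i * s i)) * (∑ j ∈ F, p j) := mul_comm _ _
  linarith [expand ▸ key]

lemma cheb_tsum (p t s : ℕ → ℝ) (hp : ∀ i, 0 ≤ p i)
    (hts : ∀ i j, 0 ≤ (t i - t j) * (s j - s i))
    (h1 : Summable fun i => p i * (t i * s i)) (h2 : Summable p)
    (h3 : Summable fun i => p i * t i) (h4 : Summable fun i => p i * s i) :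
    (∑' i, p i * (t i * s i)) * ∑' i, p i ≤ (∑' i, p i * t i) * ∑' i, p i * s i := by
  refine le_of_tendsto_of_tendsto'
    (h1.hasSum.tendsto_sum_nat.mul h2.hasSum.tendsto_sum_nat)
    (h3.hasSum.tendsto_sum_nat.mul h4.hasSum.tendsto_sum_nat)
    (fun N => cheb_finset (Finset.range N) p t s hp hts)


lemma expaux {x y : ℝ} (hx : 0 < x) (hxy : x < y) :
    x * (1 - exp (-(2*y))) ≤ y * (1 - exp (-(2*x))) := by
  set a := 2*x with ha
  set u := 2*y - 2*x with hu
  have hu0 : 0 < u := by simp only [hu]; linarith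
  have ha0 : 0 < a := by simp only [ha]; linarith
  have core : a * (exp u - 1) ≤ u * exp u * (exp a - 1) := by
    have h1 : a + 1 ≤ exp a := Real.add_one_le_exp a
    have h2 : exp u - 1 ≤ u * exp u := by
      have h3 : -u + 1 ≤ exp (-u) := Real.add_one_le_exp (-u)
      have h4 : exp (-u) * exp u = 1 := by rw [← exp_add]; simp
      nlinarith [exp_pos u]
    have s1 : a * (exp u - 1) ≤ a * (u * exp u) := mul_le_mul_of_nonneg_left h2 ha0.le
    have s2 : (u * exp u) * a ≤ (u * exp u) * (exp a - 1) :=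
      mul_le_mul_of_nonneg_left (by linarith) (by positivity)
    nlinarith [s1, s2]
  have hU0 : 0 < exp u := exp_pos u
  have hA0 : 0 < exp a := exp_pos a
  have hUA : exp u * exp a = exp (2*y) := by rw [← exp_add]; congr 1; simp [hu, ha]
  have h2y : exp (-(2*y)) = (exp u * exp a)⁻¹ := by rw [hUA, exp_neg]
  have h2x : exp (-(2*x)) = (exp a)⁻¹ := by rw [← ha, exp_neg]
  rw [h2y, h2x]
  have goal2 : a * (exp u * exp a - 1) ≤ (u + a) * (exp u * exp a - exp u) := by
    nlinarith [core]
  have e1 : x * (1 - (exp u * exp a)⁻¹)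
      = a * (exp u * exp a - 1) / (2 * (exp u * exp a)) := by
    field_simp [ha]; ring
  have e2 : y * (1 - (exp a)⁻¹)
      = (u + a) * (exp u * exp a - exp u) / (2 * (exp u * exp a)) := by
    rw [hu, ha]; field_simp; ring
  rw [e1, e2]
  exact div_le_div_of_nonneg_right goal2 (by positivity)

lemma sinh_ineq {x y : ℝ} (hx : 0 < x) (hxy : x < y) :
    x * exp x * sinh y ≤ y * exp y * sinh x := by
  have key := expaux hx hxy
  have hXY : (0:ℝ) < exp x * exp y := mul_pos (exp_pos x) (exp_pos y)
  have key2 := mul_le_mul_of_nonneg_right key hXY.le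
  have e1 : exp (-(2*x)) * (exp x * exp y) = exp (-x) * exp y := by
    rw [← exp_add, ← exp_add, ← exp_add]; ring_nf
  have e2 : exp (-(2*y)) * (exp x * exp y) = exp (-y) * exp x := by
    rw [← exp_add, ← exp_add, ← exp_add]; ring_nf
  have key3 : x * (exp x * exp y) - x * (exp (-y) * exp x)
      ≤ y * (exp x * exp y) - y * (exp (-x) * exp y) := by
    have l1 : x * (1 - exp (-(2*y))) * (exp x * exp y)
        = x * (exp x * exp y) - x * (exp (-y) * exp x) := by
      rw [show x * (1 - exp (-(2*y))) * (exp x * exp y)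
          = x * (exp x * exp y) - x * (exp (-(2*y)) * (exp x * exp y)) from by ring, e2]
    have l2 : y * (1 - exp (-(2*x))) * (exp x * exp y)
        = y * (exp x * exp y) - y * (exp (-x) * exp y) := by
      rw [show y * (1 - exp (-(2*x))) * (exp x * exp y)
          = y * (exp x * exp y) - y * (exp (-(2*x)) * (exp x * exp y)) from by ring, e1]
    linarith [key2, l1.symm, l2.symm, l1, l2]
  rw [Real.sinh_eq, Real.sinh_eq]
  linarith [key3]

lemma cosh_ineq {x y : ℝ} (hx : 0 < x) (hxy : x < y) :
    x^2 * exp x * cosh y < y^2 * exp y * cosh x := by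
  rw [Real.cosh_eq, Real.cosh_eq]
  have hy2 : (0:ℝ) < y^2 := pow_pos (hx.trans hxy) 2
  have h1 : exp x * exp (-y) < exp y * exp (-x) := by
    rw [← exp_add, ← exp_add]; exact exp_lt_exp.2 (by linarith)
  have h2 : x^2 < y^2 := by nlinarith
  have f1 : x^2 * (exp x * exp y) < y^2 * (exp x * exp y) :=
    mul_lt_mul_of_pos_right h2 (mul_pos (exp_pos _) (exp_pos _))
  have f2 : x^2 * (exp x * exp (-y)) < y^2 * (exp x * exp (-y)) :=
    mul_lt_mul_of_pos_right h2 (mul_pos (exp_pos _) (exp_pos _))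
  have f3 : y^2 * (exp x * exp (-y)) < y^2 * (exp y * exp (-x)) :=
    mul_lt_mul_of_pos_left h1 hy2
  linarith [f1, f2, f3]


noncomputable def bA (μ : ℝ) (k : ℕ) : ℝ :=
  1 / (4 ^ k * (Nat.factorial k : ℝ) * Real.Gamma ((k : ℝ) + μ + 1))

noncomputable def bD (μ : ℝ) (k : ℕ) : ℝ :=
  ((k : ℝ) + 2 * (μ + 1)) / ((2 * k).factorial : ℝ)

variable {μ : ℝ}

lemma gammaPos (hμ : -1 < μ) (k : ℕ) : 0 < Real.Gamma ((k : ℝ) + μ + 1) :=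
  Real.Gamma_pos_of_pos (by have : (0:ℝ) ≤ k := Nat.cast_nonneg k; linarith)

lemma bApos (hμ : -1 < μ) (k : ℕ) : 0 < bA μ k := by
  unfold bA
  have h1 := gammaPos hμ k
  have h2 : (0:ℝ) < (Nat.factorial k : ℝ) := by exact_mod_cast Nat.factorial_pos k
  positivity

lemma bDpos (hμ : -1 < μ) (k : ℕ) : 0 < bD μ k := by
  unfold bD
  have h2 : (0:ℝ) < ((2*k).factorial : ℝ) := by exact_mod_cast Nat.factorial_pos (2*k)
  have h3 : (0:ℝ) ≤ k := Nat.cast_nonneg k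
  have : (0:ℝ) < (k:ℝ) + 2*(μ+1) := by linarith
  positivity

lemma gamma_lower (hμ : -1 < μ) (k : ℕ) :
    Real.Gamma (μ + 1) * (μ + 1) ^ k ≤ Real.Gamma ((k : ℝ) + μ + 1) := by
  induction k with
  | zero => simp
  | succ n ih =>
    have hpos : (0:ℝ) < (n:ℝ) + μ + 1 := by
      have : (0:ℝ) ≤ n := Nat.cast_nonneg n; linarith
    have hrec : Real.Gamma (((n+1:ℕ) : ℝ) + μ + 1)
        = ((n:ℝ) + μ + 1) * Real.Gamma ((n:ℝ) + μ + 1) := by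
      rw [show ((n+1:ℕ) : ℝ) + μ + 1 = ((n:ℝ) + μ + 1) + 1 by push_cast; ring]
      exact Real.Gamma_add_one hpos.ne'
    rw [hrec, pow_succ]
    have hμ1 : (0:ℝ) < μ + 1 := by linarith
    have hg := gammaPos hμ n
    calc Real.Gamma (μ+1) * ((μ+1)^n * (μ+1))
        = (μ+1) * (Real.Gamma (μ+1) * (μ+1)^n) := by ring
      _ ≤ (μ+1) * Real.Gamma ((n:ℝ) + μ + 1) := by
          exact mul_le_mul_of_nonneg_left ih hμ1.le
      _ ≤ ((n:ℝ) + μ + 1) * Real.Gamma ((n:ℝ) + μ + 1) := by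
          have : (0:ℝ) ≤ n := Nat.cast_nonneg n
          exact mul_le_mul_of_nonneg_right (by linarith) hg.le

lemma bAsummable (hμ : -1 < μ) (z : ℝ) :
    Summable (fun k => bA μ k * z ^ (2*k)) := by
  have hμ1 : (0:ℝ) < μ + 1 := by linarith
  have hG : 0 < Real.Gamma (μ + 1) := Real.Gamma_pos_of_pos hμ1
  refine Summable.of_nonneg_of_le (fun k => ?_) (fun k => ?_)
    ((Real.summable_pow_div_factorial (z^2/(4*(μ+1)))).mul_left (1 / Real.Gamma (μ+1)))
  · have := bApos hμ k
    have : (0:ℝ) ≤ z^(2*k) := by rw [pow_mul]; positivity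
    positivity
  · have hfk : (0:ℝ) < (Nat.factorial k : ℝ) := by exact_mod_cast Nat.factorial_pos k
    have hGk := gammaPos hμ k
    have hlow := gamma_lower hμ k
    calc bA μ k * z^(2*k) = (z^2)^k / (4^k * (Nat.factorial k : ℝ) * Real.Gamma ((k:ℝ)+μ+1)) := by
          unfold bA; rw [pow_mul]; ring
      _ ≤ (z^2)^k / (4^k * (Nat.factorial k : ℝ) * (Real.Gamma (μ+1) * (μ+1)^k)) := by
          refine div_le_div_of_nonneg_left (by positivity) (by positivity) ?_
          exact mul_le_mul_of_nonneg_left hlow (by positivity)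
      _ = 1 / Real.Gamma (μ+1) * ((z^2/(4*(μ+1)))^k / (Nat.factorial k : ℝ)) := by
          rw [div_pow, mul_pow]
          field_simp

lemma bDsummable (hμ : -1 < μ) (z : ℝ) :
    Summable (fun k => bD μ k * z ^ (2*k)) := by
  have hμ1 : (0:ℝ) < μ + 1 := by linarith
  set c : ℝ := 2*(μ+1) with hc
  have hc0 : 0 < c := by positivity
  refine Summable.of_nonneg_of_le (fun k => ?_) (fun k => ?_)
    ((Real.summable_pow_div_factorial (2*z^2)).mul_left (1 + c))
  · have := bDpos hμ k
    have : (0:ℝ) ≤ z^(2*k) := by rw [pow_mul]; positivity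
    positivity
  · have hfk : (0:ℝ) < (Nat.factorial k : ℝ) := by exact_mod_cast Nat.factorial_pos k
    have hf2k : (0:ℝ) < ((2*k).factorial : ℝ) := by exact_mod_cast Nat.factorial_pos (2*k)
    have hkfle : (Nat.factorial k : ℝ) ≤ ((2*k).factorial : ℝ) := by
      exact_mod_cast Nat.factorial_le (by omega)
    have h2k : (1:ℝ) ≤ 2^k := one_le_pow₀ (by norm_num)
    have hk2k : (k:ℝ) ≤ 2^k := by
      exact_mod_cast (k.lt_two_pow_self).le
    calc bD μ k * z^(2*k) = ((k:ℝ) + c) * (z^2)^k / ((2*k).factorial : ℝ) := by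
          unfold bD; rw [pow_mul]; ring
      _ ≤ ((1+c) * 2^k) * (z^2)^k / (Nat.factorial k : ℝ) := by
          apply div_le_div₀ (by positivity) ?_ hfk hkfle
          apply mul_le_mul_of_nonneg_right ?_ (by positivity)
          nlinarith
      _ = (1+c) * ((2*z^2)^k / (Nat.factorial k : ℝ)) := by
          rw [mul_pow]; ring

-- closed form for the comparison series
lemma bD_tsum {μ : ℝ} (hμ : -1 < μ) (z : ℝ) (hsD : Summable (fun k => bD μ k * z ^ (2*k))) :
    ∑' k, bD μ k * z ^ (2*k) = 2*(μ+1) * Real.cosh z + z/2 * Real.sinh z := by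
  set c : ℝ := 2*(μ+1) with hc
  have scosh : Summable (fun k : ℕ => z^(2*k)/((2*k).factorial : ℝ)) :=
    (Real.hasSum_cosh z).summable
  have s1 : Summable (fun k : ℕ => c * (z^(2*k)/((2*k).factorial : ℝ))) := scosh.mul_left c
  have hsplit : ∀ k : ℕ, bD μ k * z ^ (2*k)
      = c * (z^(2*k)/((2*k).factorial : ℝ)) + (k:ℝ) * z^(2*k) / ((2*k).factorial : ℝ) := by
    intro k; unfold bD; ring
  have s2 : Summable (fun k : ℕ => (k:ℝ) * z^(2*k) / ((2*k).factorial : ℝ)) := by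
    refine (hsD.sub s1).congr fun k => ?_
    rw [hsplit k]; ring
  have hterm : ∀ k : ℕ, ((k+1:ℕ):ℝ) * z^(2*(k+1)) / ((2*(k+1)).factorial : ℝ)
      = z/2 * (z^(2*k+1)/((2*k+1).factorial : ℝ)) := by
    intro k
    have hf : ((2*(k+1)).factorial : ℝ) = (2*(k:ℝ)+2) * ((2*k+1).factorial : ℝ) := by
      rw [show 2*(k+1) = (2*k+1)+1 by ring, Nat.factorial_succ]
      push_cast; ring
    have hp : z^(2*(k+1)) = z^(2*k+1) * z := by
      rw [show 2*(k+1) = (2*k+1)+1 by ring, pow_succ]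
    have hfz : ((2*k+1).factorial : ℝ) ≠ 0 := by
      exact_mod_cast (Nat.factorial_pos (2*k+1)).ne'
    rw [hf, hp]
    push_cast
    field_simp
  have hksum : ∑' k : ℕ, (k:ℝ) * z^(2*k) / ((2*k).factorial : ℝ) = z/2 * Real.sinh z := by
    rw [s2.tsum_eq_zero_add]
    simp only [Nat.cast_zero, zero_mul, zero_div, zero_add]
    calc ∑' k : ℕ, ((k+1:ℕ):ℝ) * z^(2*(k+1)) / ((2*(k+1)).factorial : ℝ)
        = ∑' k : ℕ, z/2 * (z^(2*k+1)/((2*k+1).factorial : ℝ)) := by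
          exact tsum_congr hterm
      _ = z/2 * Real.sinh z := by rw [tsum_mul_left, Real.sinh_eq_tsum]
  calc ∑' k, bD μ k * z ^ (2*k)
      = ∑' k : ℕ, (c * (z^(2*k)/((2*k).factorial : ℝ)) + (k:ℝ) * z^(2*k) / ((2*k).factorial : ℝ)) := tsum_congr hsplit
    _ = (∑' k : ℕ, c * (z^(2*k)/((2*k).factorial : ℝ))) + ∑' k : ℕ, (k:ℝ) * z^(2*k) / ((2*k).factorial : ℝ) := s1.tsum_add s2
    _ = c * Real.cosh z + z/2 * Real.sinh z := by
        rw [tsum_mul_left, Real.cosh_eq_tsum, hksum]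

lemma ratio_anti {μ : ℝ} (hμ : -1 < μ) : Antitone (fun k => bA μ k / bD μ k) := by
  apply antitone_nat_of_succ_le
  intro k
  have hμ1 : (0:ℝ) < μ + 1 := by linarith
  have hk0 : (0:ℝ) ≤ k := Nat.cast_nonneg k
  have hGk := gammaPos hμ k
  have hfk : (0:ℝ) < (Nat.factorial k : ℝ) := by exact_mod_cast Nat.factorial_pos k
  have hf2k : (0:ℝ) < ((2*k).factorial : ℝ) := by exact_mod_cast Nat.factorial_pos (2*k)
  have hf2k2 : (0:ℝ) < ((2*(k+1)).factorial : ℝ) := by exact_mod_cast Nat.factorial_pos _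
  rw [div_le_div_iff₀ (bDpos hμ (k+1)) (bDpos hμ k)]
  -- recurrence for bA
  have e1 : bA μ (k+1) * (4*((k:ℝ)+1)*((k:ℝ)+μ+1)) = bA μ k := by
    have hkμ0 : (0:ℝ) < (k:ℝ)+μ+1 := by linarith
    have hG1 : Real.Gamma (((k+1 : ℕ) : ℝ) + μ + 1) = ((k:ℝ)+μ+1) * Real.Gamma ((k:ℝ)+μ+1) := by
      rw [show ((k+1 : ℕ) : ℝ) + μ + 1 = ((k:ℝ) + μ + 1) + 1 by push_cast; ring]
      exact Real.Gamma_add_one hkμ0.ne'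
    have hD' : ((4:ℝ)^(k+1) * (((k+1).factorial : ℕ):ℝ) * Real.Gamma (((k+1:ℕ):ℝ) + μ + 1)) ≠ 0 := by
      have := gammaPos hμ (k+1)
      have hf : (0:ℝ) < (((k+1).factorial : ℕ):ℝ) := by exact_mod_cast Nat.factorial_pos (k+1)
      positivity
    have hDk : ((4:ℝ)^k * ((k.factorial : ℕ):ℝ) * Real.Gamma ((k:ℝ) + μ + 1)) ≠ 0 := by
      positivity
    unfold bA
    rw [div_mul_eq_mul_div, one_mul, div_eq_div_iff hD' hDk, hG1, pow_succ, Nat.factorial_succ]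
    push_cast
    ring
  -- inequality for bD
  have hfrec : ((2*(k+1)).factorial : ℝ) = (2*(k:ℝ)+2)*(2*(k:ℝ)+1)*((2*k).factorial : ℝ) := by
    rw [show 2*(k+1) = (2*k+1)+1 by ring, Nat.factorial_succ, Nat.factorial_succ]
    push_cast; ring
  have poly : ((k:ℝ) + 2*(μ+1)) * ((2*(k:ℝ)+2)*(2*(k:ℝ)+1))
      ≤ 4*((k:ℝ)+1)*((k:ℝ)+μ+1) * (((k:ℝ)+1) + 2*(μ+1)) := by
    nlinarith [mul_nonneg hk0 hμ1.le, mul_nonneg (mul_nonneg hk0 hk0) hμ1.le, sq_nonneg (μ+1),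
      mul_nonneg hk0 (sq_nonneg (μ+1)), mul_nonneg hk0 hk0]
  have e2 : bD μ k ≤ 4*((k:ℝ)+1)*((k:ℝ)+μ+1) * bD μ (k+1) := by
    have hrw : 4*((k:ℝ)+1)*((k:ℝ)+μ+1) * bD μ (k+1)
        = (4*((k:ℝ)+1)*((k:ℝ)+μ+1) * (((k+1:ℕ):ℝ) + 2*(μ+1))) / ((2*(k+1)).factorial : ℝ) := by
      unfold bD; ring
    rw [hrw]
    unfold bD
    rw [div_le_div_iff₀ hf2k hf2k2, hfrec]
    push_cast
    nlinarith [mul_le_mul_of_nonneg_right poly hf2k.le]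
  calc bA μ (k+1) * bD μ k
      ≤ bA μ (k+1) * (4*((k:ℝ)+1)*((k:ℝ)+μ+1) * bD μ (k+1)) :=
        mul_le_mul_of_nonneg_left e2 (bApos hμ (k+1)).le
    _ = bA μ k * bD μ (k+1) := by rw [← e1]; ring

lemma besselI_eq {μ : ℝ} (hμ : -1 < μ) {z : ℝ} (hz : 0 < z) :
    besselI μ z = (z/2) ^ μ * ∑' k, bA μ k * z ^ (2*k) := by
  unfold besselI
  rw [← tsum_mul_left]
  refine tsum_congr fun k => ?_
  have hz2 : (0:ℝ) < z/2 := by linarith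
  have hΓ : 0 < Real.Gamma ((k:ℝ)+μ+1) := gammaPos hμ k
  have hfk : (0:ℝ) < (k.factorial : ℝ) := by exact_mod_cast Nat.factorial_pos k
  have hpow : (z/2) ^ (μ + 2*(k:ℝ)) = (z/2)^μ * (z/2)^(2*k : ℕ) := by
    rw [show μ + 2*(k:ℝ) = μ + ((2*k : ℕ) : ℝ) by push_cast; ring, Real.rpow_add hz2,
      Real.rpow_natCast]
  have h24 : (z/2)^(2*k) = z^(2*k)/4^k := by
    have h2 : (2:ℝ)^(2*k) = 4^k := by rw [pow_mul]; norm_num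
    rw [div_pow, h2]
  rw [hpow, h24]
  unfold bA
  have h4 : ((4:ℝ))^k ≠ 0 := by positivity
  field_simp

theorem besselI_ratio_upper (μ x y : ℝ) (hμ : -1 < μ) (hx : 0 < x) (hxy : x < y) :
    besselI μ y / besselI μ x < (y / x) ^ (μ + 2) * Real.exp (y - x) := by
  have hy : 0 < y := hx.trans hxy
  have hyx : 0 < y / x := by positivity
  set fx := ∑' k, bA μ k * x ^ (2*k) with hfxd
  set fy := ∑' k, bA μ k * y ^ (2*k) with hfyd
  set Cx := ∑' k, bD μ k * x ^ (2*k) with hCxd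
  set Cy := ∑' k, bD μ k * y ^ (2*k) with hCyd
  -- positivity of the sums
  have hxpow : ∀ k : ℕ, (0:ℝ) < x ^ (2*k) := fun k => pow_pos hx _
  have hypow : ∀ k : ℕ, (0:ℝ) < y ^ (2*k) := fun k => pow_pos hy _
  have hfx : 0 < fx := (bAsummable hμ x).tsum_pos
    (fun k => (mul_pos (bApos hμ k) (hxpow k)).le) 0 (mul_pos (bApos hμ 0) (hxpow 0))
  have hfy : 0 < fy := (bAsummable hμ y).tsum_pos
    (fun k => (mul_pos (bApos hμ k) (hypow k)).le) 0 (mul_pos (bApos hμ 0) (hypow 0))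
  have hCx : 0 < Cx := (bDsummable hμ x).tsum_pos
    (fun k => (mul_pos (bDpos hμ k) (hxpow k)).le) 0 (mul_pos (bDpos hμ 0) (hxpow 0))
  have hCy : 0 < Cy := (bDsummable hμ y).tsum_pos
    (fun k => (mul_pos (bDpos hμ k) (hypow k)).le) 0 (mul_pos (bDpos hμ 0) (hypow 0))
  -- Chebyshev step : fy * Cx ≤ fx * Cy
  have cheb : fy * Cx ≤ fx * Cy := by
    set p : ℕ → ℝ := fun k => bD μ k * x ^ (2*k) with hpd
    set t : ℕ → ℝ := fun k => bA μ k / bD μ k with htd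
    set s : ℕ → ℝ := fun k => (y/x) ^ (2*k) with hsd
    have hp : ∀ i, 0 ≤ p i := fun i => (mul_pos (bDpos hμ i) (hxpow i)).le
    have hmono : Monotone s := fun i j hij => by
      simp only [hsd]
      exact pow_le_pow_right₀ ((one_le_div hx).2 hxy.le) (by omega)
    have hanti : Antitone t := ratio_anti hμ
    have hts : ∀ i j, 0 ≤ (t i - t j) * (s j - s i) := by
      intro i j
      rcases le_total i j with h | h
      · exact mul_nonneg (sub_nonneg.2 (hanti h)) (sub_nonneg.2 (hmono h))
      · have h1 := sub_nonpos.2 (hanti h)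
        have h2 := sub_nonpos.2 (hmono h)
        nlinarith
    have ept : ∀ k, p k * t k = bA μ k * x ^ (2*k) := fun k => by
      simp only [hpd, htd]
      field_simp [(bDpos hμ k).ne']
      try ring
    have eps : ∀ k, p k * s k = bD μ k * y ^ (2*k) := fun k => by
      simp only [hpd, hsd]
      rw [div_pow]
      field_simp
      try ring
    have epts : ∀ k, p k * (t k * s k) = bA μ k * y ^ (2*k) := fun k => by
      simp only [hpd, htd, hsd]
      rw [div_pow]
      field_simp [(bDpos hμ k).ne']
      try ring
    have h1 : Summable (fun k => p k * (t k * s k)) :=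
      (bAsummable hμ y).congr fun k => (epts k).symm
    have h2 : Summable p := bDsummable hμ x
    have h3 : Summable (fun k => p k * t k) :=
      (bAsummable hμ x).congr fun k => (ept k).symm
    have h4 : Summable (fun k => p k * s k) :=
      (bDsummable hμ y).congr fun k => (eps k).symm
    have := cheb_tsum p t s hp hts h1 h2 h3 h4
    rw [tsum_congr epts, tsum_congr ept, tsum_congr eps] at this
    calc fy * Cx = (∑' k, bA μ k * y ^ (2*k)) * ∑' (i : ℕ), p i := by rw [hpd]
      _ ≤ _ := this
      _ = fx * Cy := rfl
  -- strict comparison for C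
  have key2 : Cy * (x^2 * exp x) < Cx * (y^2 * exp y) := by
    rw [hCxd, hCyd, bD_tsum hμ y (bDsummable hμ y), bD_tsum hμ x (bDsummable hμ x)]
    have hμ1 : (0:ℝ) < μ + 1 := by linarith
    have cA := cosh_ineq hx hxy
    have cB := sinh_ineq hx hxy
    have cA' := mul_lt_mul_of_pos_left cA (by linarith : (0:ℝ) < 2*(μ+1))
    have cB' := mul_le_mul_of_nonneg_left cB (by positivity : (0:ℝ) ≤ x*y/2)
    nlinarith [cA', cB']
  -- assemble
  have step1 : fy / fx ≤ Cy / Cx := by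
    rw [div_le_div_iff₀ hfx hCx]
    linarith [cheb]
  have step2 : Cy / Cx < (y^2 * exp y) / (x^2 * exp x) := by
    rw [div_lt_div_iff₀ hCx (by positivity)]
    linarith [key2]
  have step3 : (y^2 * exp y) / (x^2 * exp x) = (y/x)^(2:ℕ) * exp (y - x) := by
    rw [Real.exp_sub]
    field_simp
  have hratio : besselI μ y / besselI μ x = (y/x) ^ μ * (fy / fx) := by
    rw [besselI_eq hμ hy, besselI_eq hμ hx, mul_div_mul_comm]
    congr 1
    rw [← Real.div_rpow (by positivity) (by positivity)]
    congr 1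
    field_simp
  have hsplit : (y/x) ^ (μ+2) = (y/x) ^ μ * (y/x)^(2:ℕ) := by
    rw [show (y/x) ^ (μ+2) = (y/x) ^ (μ + ((2:ℕ):ℝ)) by norm_num, Real.rpow_add hyx,
      Real.rpow_natCast]
  rw [hratio, hsplit, mul_assoc]
  apply mul_lt_mul_of_pos_left _ (Real.rpow_pos_of_pos hyx μ)
  calc fy / fx ≤ Cy / Cx := step1
    _ < (y^2 * exp y) / (x^2 * exp x) := step2
    _ = (y/x)^(2:ℕ) * exp (y - x) := step3
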